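/- arXiv:1708.09112 — 4 statements merged into one kernel-verified Lean document; each statement's English description precedes it below -/
import Mathlib

section
/- The function U_{λ,α}(x) = λ^{(N-2)/2} / (1 + λ^{2+α}|x|^{2+α})^{(N-2)/(2+α)} satisfies -ΔU = (N-2)(N+α)|x|^α U^{(N+2+2α)/(N-2)} for all x in R^N \ {0}. -/
open scoped BigOperators

/-- The Euclidean Laplacian: sum of second partial derivatives. -/
noncomputable def lap {N : ℕ} (u : EuclideanSpace ℝ (Fin N) → ℝ)
    (x : EuclideanSpace ℝ (Fin N)) : ℝ :=
  ∑ i : Fin N, fderiv ℝ (fun y => fderiv ℝ u y (EuclideanSpace.single i 1)) x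
    (EuclideanSpace.single i 1)

noncomputable def gg (c a β γ : ℝ) : ℝ → ℝ := fun u => c * (1 + a * u ^ β) ^ (-γ)

noncomputable def gg1 (c a β γ : ℝ) : ℝ → ℝ := fun u =>
  c * (-γ * (1 + a * u ^ β) ^ (-γ - 1) * (a * (β * u ^ (β - 1))))

noncomputable def gg2 (c a β γ : ℝ) : ℝ → ℝ := fun u =>
  (c * -γ) * ((-γ - 1) * (1 + a * u ^ β) ^ (-γ - 2) * (a * (β * u ^ (β - 1))) *
      (a * (β * u ^ (β - 1)))
    + (1 + a * u ^ β) ^ (-γ - 1) * (a * (β * ((β - 1) * u ^ (β - 2)))))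

lemma inner_hasDeriv (a β : ℝ) {t : ℝ} (ht : 0 < t) :
    HasDerivAt (fun u : ℝ => 1 + a * u ^ β) (a * (β * t ^ (β - 1))) t :=
  ((Real.hasDerivAt_rpow_const (Or.inl ht.ne')).const_mul a).const_add 1

lemma gg_hasDeriv (c a β γ : ℝ) (ha : 0 ≤ a) {t : ℝ} (ht : 0 < t) :
    HasDerivAt (gg c a β γ) (gg1 c a β γ t) t := by
  have hs : (0:ℝ) < 1 + a * t ^ β := by positivity
  have h2 : HasDerivAt (fun s : ℝ => s ^ (-γ)) (-γ * (1 + a * t ^ β) ^ (-γ - 1))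
      (1 + a * t ^ β) := Real.hasDerivAt_rpow_const (Or.inl hs.ne')
  have h3 := (h2.comp t (inner_hasDeriv a β ht)).const_mul c
  exact h3

lemma gg1_hasDeriv (c a β γ : ℝ) (ha : 0 ≤ a) {t : ℝ} (ht : 0 < t) :
    HasDerivAt (gg1 c a β γ) (gg2 c a β γ t) t := by
  have hs : (0:ℝ) < 1 + a * t ^ β := by positivity
  have hF : HasDerivAt (fun u : ℝ => (1 + a * u ^ β) ^ (-γ - 1))
      ((-γ - 1) * (1 + a * t ^ β) ^ (-γ - 1 - 1) * (a * (β * t ^ (β - 1)))) t := by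
    have h2 : HasDerivAt (fun s : ℝ => s ^ (-γ - 1))
        ((-γ - 1) * (1 + a * t ^ β) ^ (-γ - 1 - 1)) (1 + a * t ^ β) :=
      Real.hasDerivAt_rpow_const (Or.inl hs.ne')
    exact h2.comp t (inner_hasDeriv a β ht)
  rw [show -γ - 1 - 1 = -γ - 2 by ring] at hF
  have hG : HasDerivAt (fun u : ℝ => a * (β * u ^ (β - 1)))
      (a * (β * ((β - 1) * t ^ (β - 1 - 1)))) t :=
    ((Real.hasDerivAt_rpow_const (Or.inl ht.ne')).const_mul β).const_mul a
  rw [show β - 1 - 1 = β - 2 by ring] at hG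
  have h := (hF.mul hG).const_mul (c * -γ)
  have hfun : gg1 c a β γ = fun u : ℝ =>
      (c * -γ) * ((1 + a * u ^ β) ^ (-γ - 1) * (a * (β * u ^ (β - 1)))) := by
    funext u; simp only [gg1]; ring
  rw [hfun]
  exact h

/-- The standard bubble `U_{λ,α}` solves `-ΔU = (N-2)(N+α)|x|^α U^{p_α}` away from the origin. -/
theorem stmt0 (N : ℕ) (hN : 3 ≤ N) (α lam : ℝ) (hα : 0 < α) (hlam : 0 < lam)
    (U : EuclideanSpace ℝ (Fin N) → ℝ)
    (hU : U = fun x => lam ^ (((N : ℝ) - 2) / 2) *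
      (1 + lam ^ (2 + α) * ‖x‖ ^ (2 + α)) ^ (-(((N : ℝ) - 2) / (2 + α)))) :
    ∀ x : EuclideanSpace ℝ (Fin N), x ≠ 0 →
      -lap U x = ((N : ℝ) - 2) * ((N : ℝ) + α) * ‖x‖ ^ α *
        (U x) ^ (((N : ℝ) + 2 + 2 * α) / ((N : ℝ) - 2)) := by
  intro x hx
  set n : ℝ := (N : ℝ) with hn
  have hn3 : (3:ℝ) ≤ n := by rw [hn]; exact_mod_cast hN
  have h2α : (0:ℝ) < 2 + α := by linarith
  have hn2 : n - 2 ≠ 0 := by linarith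
  set a : ℝ := lam ^ (2 + α) with ha_def
  set c : ℝ := lam ^ ((n - 2) / 2) with hc_def
  set β : ℝ := (2 + α) / 2 with hβ_def
  set γ : ℝ := (n - 2) / (2 + α) with hγ_def
  have ha : 0 < a := Real.rpow_pos_of_pos hlam _
  have hc : 0 < c := Real.rpow_pos_of_pos hlam _
  -- norm power identity
  have hnorm : ∀ y : EuclideanSpace ℝ (Fin N), ((‖y‖ ^ 2 : ℝ)) ^ β = ‖y‖ ^ (2 + α) := by
    intro y
    rw [← Real.rpow_natCast ‖y‖ 2, ← Real.rpow_mul (norm_nonneg y)]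
    congr 1
    push_cast
    rw [hβ_def]; ring
  have hUg : U = fun y => gg c a β γ (‖y‖ ^ 2) := by
    funext y
    rw [hU]
    simp only [gg, hnorm y]
  -- derivative of the square norm
  have hq : ∀ y : EuclideanSpace ℝ (Fin N),
      HasFDerivAt (fun z : EuclideanSpace ℝ (Fin N) => ‖z‖ ^ 2) (2 • (innerSL ℝ y)) y :=
    fun y => (hasStrictFDerivAt_norm_sq y).hasFDerivAt
  have htpos : ∀ y : EuclideanSpace ℝ (Fin N), y ≠ 0 → (0:ℝ) < ‖y‖ ^ 2 := by
    intro y hy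
    have : ‖y‖ ≠ 0 := norm_ne_zero_iff.mpr hy
    positivity
  -- first derivative of U
  have hDU : ∀ y : EuclideanSpace ℝ (Fin N), y ≠ 0 →
      HasFDerivAt U (gg1 c a β γ (‖y‖ ^ 2) • ((2:ℕ) • (innerSL ℝ y))) y := by
    intro y hy
    rw [hUg]
    have := (gg_hasDeriv c a β γ ha.le (htpos y hy)).comp_hasFDerivAt y (hq y); exact this
  have hev : ∀ i : Fin N,
      (fun y => fderiv ℝ U y (EuclideanSpace.single i 1)) =ᶠ[nhds x]
        (fun y => gg1 c a β γ (‖y‖ ^ 2) * (2 * (EuclideanSpace.proj i) y)) := by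
    intro i
    filter_upwards [eventually_ne_nhds hx] with y hy
    rw [(hDU y hy).fderiv]
    simp [EuclideanSpace.inner_single_right, mul_comm]
  set t : ℝ := ‖x‖ ^ 2 with ht_def
  have ht : 0 < t := htpos x hx
  have hterm : ∀ i : Fin N,
      fderiv ℝ (fun y => fderiv ℝ U y (EuclideanSpace.single i 1)) x
        (EuclideanSpace.single i 1)
      = 2 * gg1 c a β γ t + 4 * gg2 c a β γ t * (x i) ^ 2 := by
    intro i
    have hA : HasFDerivAt (fun y : EuclideanSpace ℝ (Fin N) => gg1 c a β γ (‖y‖ ^ 2))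
        (gg2 c a β γ t • ((2:ℕ) • (innerSL ℝ x))) x := by
      have := (gg1_hasDeriv c a β γ ha.le ht).comp_hasFDerivAt x (hq x); exact this
    have hB := ((EuclideanSpace.proj i :
        EuclideanSpace ℝ (Fin N) →L[ℝ] ℝ)).hasFDerivAt (x := x) |>.const_mul (2:ℝ)
    have hVi : HasFDerivAt (fun y => gg1 c a β γ (‖y‖ ^ 2) * (2 * (EuclideanSpace.proj i) y)) _ x :=
      hA.mul hB
    rw [Filter.EventuallyEq.fderiv_eq (hev i), hVi.fderiv]
    simp [EuclideanSpace.inner_single_right, EuclideanSpace.single_apply, ← ht_def]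
    ring
  have hsum : ∑ i : Fin N, (x i) ^ 2 = t := by
    rw [ht_def, ← real_inner_self_eq_norm_sq]
    rw [real_inner_self_eq_norm_sq, EuclideanSpace.norm_eq, Real.sq_sqrt (by positivity)]
    simp [Real.norm_eq_abs, sq_abs]
  have hlap : lap U x = 2 * n * gg1 c a β γ t + 4 * t * gg2 c a β γ t := by
    unfold lap
    rw [Finset.sum_congr rfl fun i _ => hterm i]
    rw [Finset.sum_add_distrib, Finset.sum_const, ← Finset.mul_sum, hsum]
    simp [hn]
    ring
  -- the key ODE identity
  have hs : (0:ℝ) < 1 + a * t ^ β := by positivity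
  have KEY : 4 * t * gg2 c a β γ t + 2 * n * gg1 c a β γ t
      = -(c * a * (n - 2) * (n + α) * (t ^ (β - 1) * (1 + a * t ^ β) ^ (-γ - 2))) := by
    have e3 : (1 + a * t ^ β) ^ (-γ - 1) = (1 + a * t ^ β) ^ (-γ - 2) * (1 + a * t ^ β) := by
      rw [← Real.rpow_add_one hs.ne']; congr 1; ring
    have e1 : t ^ β = t ^ (β - 1) * t := by
      rw [← Real.rpow_add_one ht.ne']; congr 1; ring
    have e2 : t ^ (β - 1) = t ^ (β - 2) * t := by
      rw [← Real.rpow_add_one ht.ne']; congr 1; ring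
    simp only [gg1, gg2]
    rw [e3, e1, e2, hβ_def, hγ_def]
    field_simp
    ring
  -- rewrite the right-hand side
  have hs' : (0:ℝ) ≤ 1 + a * t ^ β := hs.le
  have hUx : U x = c * (1 + a * t ^ β) ^ (-γ) := by
    rw [hU]
    simp only []
    rw [← hnorm x, ← ht_def]
  have hpow : (U x) ^ ((n + 2 + 2 * α) / (n - 2))
      = (c * a) * (1 + a * t ^ β) ^ (-γ - 2) := by
    rw [hUx, Real.mul_rpow hc.le (Real.rpow_nonneg hs' _)]
    rw [← Real.rpow_mul hs']
    rw [show -γ * ((n + 2 + 2 * α) / (n - 2)) = -γ - 2 by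
      rw [hγ_def]; field_simp; ring]
    rw [hc_def, ← Real.rpow_mul hlam.le]
    rw [show (n - 2) / 2 * ((n + 2 + 2 * α) / (n - 2)) = (n - 2) / 2 + (2 + α) by
      field_simp; ring]
    rw [Real.rpow_add hlam, ← hc_def, ← ha_def]
  have hα' : ‖x‖ ^ α = t ^ (β - 1) := by
    rw [ht_def, ← Real.rpow_natCast ‖x‖ 2, ← Real.rpow_mul (norm_nonneg x)]
    congr 1
    push_cast
    rw [hβ_def]; ring
  rw [hlap, hα', hpow]
  linear_combination -KEY
end

section
/- If u is a positive radial C^2 function on the unit ball solving the Hénon ODE with u(1)=0, u'(0)=0, and uniqueness holds for the initial value problem with given center value, then the Dirichlet radial solution of the Hénon problem on the unit ball is unique: any two positive radial solutions u, v with u(1)=v(1)=0 satisfy u = v. Precisely: if u and v both solve w'' + ((N-1)/r)w' + r^α w^p = 0 on (0,1) with w > 0, w'(0)=0, w(1)=0, and for every a > 0 the initial value problem with w(0)=a, w'(0)=0 has at most one solution, then u = v on [0,1]. -/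
open Set

/-- `w` solves the radial Hénon ODE `w'' + ((N-1)/r) w' + r^α w^p = 0` on the set `s`. -/
def SolvesHenonODE (N : ℕ) (α p : ℝ) (w : ℝ → ℝ) (s : Set ℝ) : Prop :=
  ∀ r ∈ s, deriv (deriv w) r + (((N : ℝ) - 1) / r) * deriv w r + r ^ α * w r ^ p = 0

private lemma henon_key (N : ℕ) (α p : ℝ) (hα : 0 < α) (hp1 : 1 < p)
    (u v : ℝ → ℝ)
    (hu_reg : ContDiffOn ℝ 2 u (Icc 0 1)) (hv_reg : ContDiffOn ℝ 2 v (Icc 0 1))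
    (hu_ode : SolvesHenonODE N α p u (Ioo 0 1))
    (hv_ode : SolvesHenonODE N α p v (Ioo 0 1))
    (hu_pos : ∀ r ∈ Ico (0 : ℝ) 1, 0 < u r)
    (hv_pos : ∀ r ∈ Ico (0 : ℝ) 1, 0 < v r)
    (hu0 : deriv u 0 = 0) (hv0 : deriv v 0 = 0)
    (hv1 : v 1 = 0)
    (huniq : ∀ a : ℝ, 0 < a → ∀ b : ℝ, 0 < b → ∀ w₁ w₂ : ℝ → ℝ,
      SolvesHenonODE N α p w₁ (Ioo 0 b) → SolvesHenonODE N α p w₂ (Ioo 0 b) →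
      ContDiffOn ℝ 2 w₁ (Ico 0 b) → ContDiffOn ℝ 2 w₂ (Ico 0 b) →
      w₁ 0 = a → w₂ 0 = a → deriv w₁ 0 = 0 → deriv w₂ 0 = 0 →
      EqOn w₁ w₂ (Ico 0 b)) :
    u 0 ≤ v 0 := by
  by_contra hlt
  push_neg at hlt
  have hu0pos : 0 < u 0 := hu_pos 0 ⟨le_refl 0, one_pos⟩
  have hv0pos : 0 < v 0 := hv_pos 0 ⟨le_refl 0, one_pos⟩
  set t : ℝ := (2 + α) / (p - 1) with ht
  have hp1' : (0:ℝ) < p - 1 := by linarith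
  have htpos : 0 < t := by positivity
  have hrat : (1:ℝ) < u 0 / v 0 := (one_lt_div hv0pos).mpr hlt
  set l : ℝ := (u 0 / v 0) ^ (1 / t) with hl
  have hl1 : 1 < l :=
    (Real.one_lt_rpow_iff_of_pos (by positivity)).mpr (Or.inl ⟨hrat, by positivity⟩)
  have hlpos : 0 < l := lt_trans one_pos hl1
  set c : ℝ := l ^ t with hc
  have hcval : c = u 0 / v 0 := by
    rw [hc, hl, ← Real.rpow_mul (by positivity), one_div, inv_mul_cancel₀ htpos.ne',
      Real.rpow_one]
  have hcpos : 0 < c := by rw [hcval]; positivity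
  set b : ℝ := 1 / l with hb
  have hb0 : 0 < b := by positivity
  have hb1 : b < 1 := by rw [hb]; exact (div_lt_one hlpos).mpr hl1
  have hlb : l * b = 1 := by rw [hb]; field_simp
  set w : ℝ → ℝ := fun r => c * v (l * r) with hw
  -- basic differentiability facts for v
  have hvO : ContDiffOn ℝ 2 v (Ioo 0 1) := hv_reg.mono Ioo_subset_Icc_self
  have hdv_cd : ContDiffOn ℝ 1 (deriv v) (Ioo 0 1) :=
    hvO.deriv_of_isOpen isOpen_Ioo (by norm_num)
  have hvdiff : ∀ s ∈ Ioo (0:ℝ) 1, DifferentiableAt ℝ v s := fun s hs =>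
    (hvO.differentiableOn (by norm_num)).differentiableAt (isOpen_Ioo.mem_nhds hs)
  have hdvdiff : ∀ s ∈ Ioo (0:ℝ) 1, DifferentiableAt ℝ (deriv v) s := fun s hs =>
    (hdv_cd.differentiableOn one_ne_zero).differentiableAt (isOpen_Ioo.mem_nhds hs)
  have hmem : ∀ x ∈ Ioo (0:ℝ) b, l * x ∈ Ioo (0:ℝ) 1 := by
    intro x hx
    refine ⟨mul_pos hlpos hx.1, ?_⟩
    calc l * x < l * b := by exact mul_lt_mul_of_pos_left hx.2 hlpos
      _ = 1 := hlb
  -- derivative of w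
  have hwd : ∀ x : ℝ, DifferentiableAt ℝ v (l * x) →
      HasDerivAt w (c * (l * deriv v (l * x))) x := by
    intro x hd
    have h1 : HasDerivAt (fun r : ℝ => l * r) l x := by
      simpa using (hasDerivAt_id x).const_mul l
    have h2 := (hd.hasDerivAt.comp x h1).const_mul c
    exact h2.congr_deriv (by ring)
  have hderiv_w : ∀ x ∈ Ioo (0:ℝ) b, deriv w x = c * (l * deriv v (l * x)) :=
    fun x hx => (hwd x (hvdiff _ (hmem x hx))).deriv
  have hderiv2_w : ∀ r ∈ Ioo (0:ℝ) b,
      deriv (deriv w) r = c * (l * (l * deriv (deriv v) (l * r))) := by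
    intro r hr
    have hev : deriv w =ᶠ[nhds r] fun x => c * (l * deriv v (l * x)) :=
      Filter.eventuallyEq_of_mem (isOpen_Ioo.mem_nhds hr) hderiv_w
    rw [hev.deriv_eq]
    have h1 : HasDerivAt (fun r : ℝ => l * r) l r := by
      simpa using (hasDerivAt_id r).const_mul l
    have h2 : HasDerivAt (fun x => c * (l * deriv v (l * x)))
        (c * (l * (l * deriv (deriv v) (l * r)))) r := by
      have h3 := (((hdvdiff _ (hmem r hr)).hasDerivAt.comp r h1).const_mul l).const_mul c
      exact h3.congr_deriv (by ring)
    exact h2.deriv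
  -- w solves the ODE on (0, b)
  have hw_ode : SolvesHenonODE N α p w (Ioo 0 b) := by
    intro r hr
    have hs := hmem r hr
    have hv_eq := hv_ode (l * r) hs
    have hrpos : 0 < r := hr.1
    have hspos : 0 < l * r := hs.1
    have hvspos : 0 < v (l * r) := hv_pos (l * r) ⟨hspos.le, hs.2⟩
    have h2a : t * (p - 1) = 2 + α := div_mul_cancel₀ _ hp1'.ne'
    have htp : t * p = t + (2 + α) := by nlinarith [h2a]
    have hcp : c ^ p = c * l ^ 2 * l ^ α := by
      rw [hc, ← Real.rpow_mul hlpos.le, htp, Real.rpow_add hlpos, Real.rpow_add hlpos,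
        Real.rpow_two]
      ring
    have hcvp : (c * v (l * r)) ^ p = c * l ^ 2 * (l ^ α * v (l * r) ^ p) := by
      rw [Real.mul_rpow hcpos.le hvspos.le, hcp]; ring
    have hsmul : (l * r) ^ α = l ^ α * r ^ α := Real.mul_rpow hlpos.le hrpos.le
    rw [show deriv (deriv w) r + ((N:ℝ) - 1) / r * deriv w r + r ^ α * w r ^ p
        = c * (l * (l * deriv (deriv v) (l * r)))
          + ((N:ℝ) - 1) / r * (c * (l * deriv v (l * r)))
          + r ^ α * (c * v (l * r)) ^ p by
      rw [hderiv2_w r hr, hderiv_w r hr]]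
    have hexp : c * (l * (l * deriv (deriv v) (l * r)))
          + ((N:ℝ) - 1) / r * (c * (l * deriv v (l * r)))
          + r ^ α * (c * v (l * r)) ^ p
        = (c * l ^ 2) * (deriv (deriv v) (l * r)
            + ((N:ℝ) - 1) / (l * r) * deriv v (l * r)
            + (l * r) ^ α * v (l * r) ^ p) := by
      rw [hcvp, hsmul]
      field_simp
    rw [hexp, hv_eq, mul_zero]
  -- regularity of w
  have hmaps : MapsTo (fun r : ℝ => l * r) (Icc 0 b) (Icc 0 1) := by
    intro x hx
    refine ⟨mul_nonneg hlpos.le hx.1, ?_⟩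
    calc l * x ≤ l * b := mul_le_mul_of_nonneg_left hx.2 hlpos.le
      _ = 1 := hlb
  have hw_reg : ContDiffOn ℝ 2 w (Icc 0 b) := by
    have h1 : ContDiffOn ℝ 2 (fun r : ℝ => v (l * r)) (Icc 0 b) :=
      hv_reg.comp ((contDiff_const.mul contDiff_id).contDiffOn) hmaps
    exact contDiffOn_const.mul h1
  -- initial values of w
  have hw0 : w 0 = u 0 := by
    rw [hw]; simp only
    rw [mul_zero, hcval]
    field_simp
  have hwd0 : deriv w 0 = 0 := by
    by_cases hd : DifferentiableAt ℝ v 0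
    · have h := hwd 0 (by rw [mul_zero]; exact hd)
      rw [h.deriv]
      simp [hv0]
    · have hnd : ¬ DifferentiableAt ℝ w 0 := by
        intro hdw
        apply hd
        have heq : v = fun s => c⁻¹ * w (l⁻¹ * s) := by
          funext s
          rw [hw]; simp only
          rw [← mul_assoc l, mul_inv_cancel₀ hlpos.ne', one_mul, ← mul_assoc,
            inv_mul_cancel₀ hcpos.ne', one_mul]
        rw [heq]
        have h1 : DifferentiableAt ℝ (w ∘ fun s : ℝ => l⁻¹ * s) 0 :=
          DifferentiableAt.comp 0 (by simpa using hdw) (differentiableAt_id.const_mul l⁻¹)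
        exact h1.const_mul c⁻¹
      rw [deriv_zero_of_not_differentiableAt hnd]
  -- uniqueness gives u = w on [0, b)
  have hequ : EqOn u w (Ico 0 b) := by
    refine huniq (u 0) hu0pos b hb0 u w ?_ hw_ode ?_ (hw_reg.mono Ico_subset_Icc_self)
      rfl hw0 hu0 hwd0
    · exact fun r hr => hu_ode r ⟨hr.1, hr.2.trans hb1⟩
    · exact hu_reg.mono (fun x hx => ⟨hx.1, hx.2.le.trans hb1.le⟩)
  -- pass to the limit at b
  have hne : (nhdsWithin b (Ico (0:ℝ) b)).NeBot := by
    apply mem_closure_iff_nhdsWithin_neBot.mp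
    rw [closure_Ico hb0.ne]
    exact right_mem_Icc.mpr hb0.le
  have hucont : ContinuousWithinAt u (Ico 0 b) b :=
    (hu_reg.continuousOn b ⟨hb0.le, hb1.le⟩).mono
      (fun x hx => ⟨hx.1, hx.2.le.trans hb1.le⟩)
  have hwcont : ContinuousWithinAt w (Ico 0 b) b :=
    (hw_reg.continuousOn b (right_mem_Icc.mpr hb0.le)).mono Ico_subset_Icc_self
  have hub : u b = w b := by
    have h1 : Filter.Tendsto u (nhdsWithin b (Ico (0:ℝ) b)) (nhds (u b)) := hucont
    have h2 : Filter.Tendsto u (nhdsWithin b (Ico (0:ℝ) b)) (nhds (w b)) :=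
      hwcont.tendsto.congr'
        (Filter.eventuallyEq_of_mem self_mem_nhdsWithin (fun x hx => (hequ hx).symm))
    exact tendsto_nhds_unique h1 h2
  have hwb : w b = 0 := by
    rw [hw]; simp only
    rw [hlb, hv1, mul_zero]
  have hpos : 0 < u b := hu_pos b ⟨hb0.le, hb1⟩
  rw [hub, hwb] at hpos
  exact lt_irrefl 0 hpos

/-- Uniqueness of the positive radial Dirichlet solution of the Hénon problem on the unit
ball, assuming uniqueness for the initial value problem. -/
theorem stmt2 (N : ℕ) (hN : 3 ≤ N) (α p : ℝ) (hα : 0 < α) (hp1 : 1 < p)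
    (hp2 : p < ((N : ℝ) + 2 + 2 * α) / ((N : ℝ) - 2))
    (u v : ℝ → ℝ)
    (hu_reg : ContDiffOn ℝ 2 u (Icc 0 1)) (hv_reg : ContDiffOn ℝ 2 v (Icc 0 1))
    (hu_ode : SolvesHenonODE N α p u (Ioo 0 1))
    (hv_ode : SolvesHenonODE N α p v (Ioo 0 1))
    (hu_pos : ∀ r ∈ Ico (0 : ℝ) 1, 0 < u r)
    (hv_pos : ∀ r ∈ Ico (0 : ℝ) 1, 0 < v r)
    (hu0 : deriv u 0 = 0) (hv0 : deriv v 0 = 0)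
    (hu1 : u 1 = 0) (hv1 : v 1 = 0)
    (huniq : ∀ a : ℝ, 0 < a → ∀ b : ℝ, 0 < b → ∀ w₁ w₂ : ℝ → ℝ,
      SolvesHenonODE N α p w₁ (Ioo 0 b) → SolvesHenonODE N α p w₂ (Ioo 0 b) →
      ContDiffOn ℝ 2 w₁ (Ico 0 b) → ContDiffOn ℝ 2 w₂ (Ico 0 b) →
      w₁ 0 = a → w₂ 0 = a → deriv w₁ 0 = 0 → deriv w₂ 0 = 0 →
      EqOn w₁ w₂ (Ico 0 b)) :
    EqOn u v (Icc 0 1) := by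
  have h1 := henon_key N α p hα hp1 u v hu_reg hv_reg hu_ode hv_ode hu_pos hv_pos hu0 hv0 hv1 huniq
  have h2 := henon_key N α p hα hp1 v u hv_reg hu_reg hv_ode hu_ode hv_pos hu_pos hv0 hu0 hu1 huniq
  have h0 : u 0 = v 0 := le_antisymm h1 h2
  have heq : EqOn u v (Ico 0 1) :=
    huniq (u 0) (hu_pos 0 ⟨le_refl 0, one_pos⟩) 1 one_pos u v hu_ode hv_ode
      (hu_reg.mono Ico_subset_Icc_self) (hv_reg.mono Ico_subset_Icc_self) rfl h0.symm hu0 hv0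
  intro x hx
  rcases eq_or_lt_of_le hx.2 with h | h
  · rw [h, hu1, hv1]
  · exact heq ⟨hx.1, h⟩
end

section
/- The function z(r) = λ^{(2+α)/2} r^{(2+α)/2} / (1 + λ^{2+α} r^{2+α})^{(N+α)/(2+α)} satisfies the singular Sturm–Liouville equation -z'' - ((N-1)/r) z' - p_α C_{N,α} λ^{2+α} r^α (1 + λ^{2+α} r^{2+α})^{-2} z = Λ₁(α) z / r² on (0,∞), where Λ₁(α) = -(α+2)(2N+α-2)/4. -/
open Set

private lemma hasDerivAt_aux (c p s q r : ℝ) (hr : 0 < r) (hU : 1 + c * r ^ s ≠ 0) :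
    HasDerivAt (fun x : ℝ => x ^ p * (1 + c * x ^ s) ^ q)
      (p * r ^ (p - 1) * (1 + c * r ^ s) ^ q
        + r ^ p * (q * (1 + c * r ^ s) ^ (q - 1) * (c * (s * r ^ (s - 1))))) r := by
  have h1 : HasDerivAt (fun x : ℝ => x ^ p) (p * r ^ (p - 1)) r :=
    Real.hasDerivAt_rpow_const (Or.inl hr.ne')
  have h2 : HasDerivAt (fun x : ℝ => 1 + c * x ^ s) (c * (s * r ^ (s - 1))) r := by
    have h := ((Real.hasDerivAt_rpow_const (p := s) (Or.inl hr.ne')).const_mul c).const_add 1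
    simpa [mul_comm, mul_assoc, mul_left_comm] using h
  have h3 := h2.rpow_const (p := q) (Or.inl hU)
  refine (h1.mul h3).congr_deriv ?_
  ring

set_option maxHeartbeats 2000000 in
/-- The explicit function `z(r) = λ^{(2+α)/2} r^{(2+α)/2} (1+λ^{2+α} r^{2+α})^{-(N+α)/(2+α)}`
is an eigenfunction of the linearized radial Hénon operator with the Hardy term, with
eigenvalue `Λ₁(α) = -(α+2)(2N+α-2)/4`. -/
theorem stmt5 (N : ℕ) (hN : 3 ≤ N) (α lam : ℝ) (hα : 0 < α) (hlam : 0 < lam)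
    (pα CNα Λ₁ : ℝ)
    (hpα : pα = ((N : ℝ) + 2 + 2 * α) / ((N : ℝ) - 2))
    (hC : CNα = ((N : ℝ) - 2) * ((N : ℝ) + α))
    (hΛ : Λ₁ = -((α + 2) * (2 * (N : ℝ) + α - 2)) / 4)
    (z : ℝ → ℝ)
    (hz : z = fun r => lam ^ ((2 + α) / 2) * r ^ ((2 + α) / 2) *
      (1 + lam ^ (2 + α) * r ^ (2 + α)) ^ (-(((N : ℝ) + α) / (2 + α)))) :
    ∀ r : ℝ, 0 < r →
      -deriv (deriv z) r - (((N : ℝ) - 1) / r) * deriv z r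
        - pα * CNα * lam ^ (2 + α) * r ^ α *
          (1 + lam ^ (2 + α) * r ^ (2 + α)) ^ (-(2 : ℝ)) * z r
        = Λ₁ * z r / r ^ 2 := by
  intro r hr
  have hs0 : (0:ℝ) < 2 + α := by linarith
  set s : ℝ := 2 + α with hs
  set c : ℝ := lam ^ s with hc
  set a : ℝ := s / 2 with ha
  set b : ℝ := ((N : ℝ) + α) / s with hb
  clear_value s
  clear_value c a b
  rw [hs] at hs0
  rw [← hs] at hs0
  have hzf : z = fun x => lam ^ a * (x ^ a * (1 + c * x ^ s) ^ (-b)) := by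
    rw [hz]; funext x; ring
  have hc0 : 0 < c := by rw [hc]; exact Real.rpow_pos_of_pos hlam s
  have hUpos : ∀ x : ℝ, 0 < x → 0 < 1 + c * x ^ s := fun x hx => by
    have := Real.rpow_pos_of_pos hx s
    positivity
  -- first derivative
  set z1 : ℝ → ℝ := fun x =>
      lam ^ a * a * (x ^ (a - 1) * (1 + c * x ^ s) ^ (-b))
        + lam ^ a * (-b) * c * s * (x ^ (a + s - 1) * (1 + c * x ^ s) ^ (-b - 1)) with hz1def
  have hz1 : ∀ x : ℝ, 0 < x → HasDerivAt z (z1 x) x := by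
    intro x hx
    have h := (hasDerivAt_aux c a s (-b) x hx (hUpos x hx).ne').const_mul (lam ^ a)
    rw [hzf]
    refine h.congr_deriv ?_
    simp only [hz1def]
    rw [show a + s - 1 = a + (s - 1) by ring, Real.rpow_add hx]
    ring
  -- second derivative
  have hz2 : HasDerivAt z1
      (lam ^ a * a * ((a - 1) * r ^ (a - 1 - 1) * (1 + c * r ^ s) ^ (-b)
          + r ^ (a - 1) * ((-b) * (1 + c * r ^ s) ^ (-b - 1) * (c * (s * r ^ (s - 1)))))
        + lam ^ a * (-b) * c * s *
          ((a + s - 1) * r ^ (a + s - 1 - 1) * (1 + c * r ^ s) ^ (-b - 1)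
            + r ^ (a + s - 1) * ((-b - 1) * (1 + c * r ^ s) ^ (-b - 1 - 1)
              * (c * (s * r ^ (s - 1)))))) r := by
    have hA := (hasDerivAt_aux c (a - 1) s (-b) r hr (hUpos r hr).ne').const_mul (lam ^ a * a)
    have hB := (hasDerivAt_aux c (a + s - 1) s (-b - 1) r hr
      (hUpos r hr).ne').const_mul (lam ^ a * (-b) * c * s)
    exact hA.add hB
  have hev : deriv z =ᶠ[nhds r] z1 := by
    filter_upwards [isOpen_Ioi.mem_nhds (show r ∈ Ioi (0:ℝ) from hr)] with x hx
    exact (hz1 x hx).deriv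
  have hd2 : deriv (deriv z) r = _ := hev.deriv_eq.trans hz2.deriv
  rw [hd2, (hz1 r hr).deriv, hz1def, hzf]
  beta_reduce
  -- now pure algebra with rpow
  have hU0 := hUpos r hr
  set U : ℝ := 1 + c * r ^ s with hU'
  have rsub : ∀ p : ℝ, r ^ (p - 1) = r ^ p / r := fun p => by
    rw [Real.rpow_sub hr, Real.rpow_one]
  have Usub : ∀ p : ℝ, U ^ (p - 1) = U ^ p / U := fun p => by
    rw [Real.rpow_sub hU0, Real.rpow_one]
  have hα' : r ^ α = r ^ s / r / r := by
    rw [show α = s - 1 - 1 by rw [hs]; ring, rsub, rsub]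
  have hU2 : U ^ (-(2:ℝ)) = 1 / U / U := by
    rw [show (-(2:ℝ)) = 0 - 1 - 1 by norm_num, Usub, Usub, Real.rpow_zero]
  rw [hα', hU2, Usub (-b - 1), Usub (-b), rsub (a - 1), rsub (a + s - 1), rsub a,
    rsub (a + s), rsub s, Real.rpow_add hr a s]
  set S : ℝ := r ^ s with hS
  set A : ℝ := r ^ a with hA
  set LA : ℝ := lam ^ a with hLA
  set Q : ℝ := U ^ (-b) with hQ
  clear_value S A LA Q
  have hU1 : (0:ℝ) < 1 + c * S := by rw [← hU']; exact hU0
  clear_value U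
  rw [hU']
  rw [hpα, hC, hΛ, ha, hb, hs]
  have hN2 : ((N:ℝ)) - 2 ≠ 0 := by
    have h3 : (3:ℝ) ≤ (N:ℝ) := by exact_mod_cast hN
    linarith
  have h2α : (2 + α) ≠ 0 := by rw [← hs]; exact hs0.ne'
  field_simp
  ring
end

section
/- Suppose f : (0,1] → R and g : [0,∞) → R are continuous, Λ < 0, and there exists r₀ > 0 such that s^{N-1} f(s) + Λ s^{N-3} < 0 for all s > r₀. If z : [0,R] → R is a C² solution of -z'' - ((N-1)/r)z' - f(r) z = Λ z/r² on (0,R) with z(0)=z(R)=0, z ≥ 0, z ≤ 1, and z'(R) < 0, then z'(r) < 0 for all r ∈ (r₀, R). -/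
open Set

/-- Monotone-decay mechanism: under the sign condition
`s^{N-1} f(s) + Λ s^{N-3} < 0` for `s > r₀`, a nonnegative solution of the linearized
equation with `z(0)=z(R)=0`, `z ≤ 1` and `z'(R) < 0` satisfies `z' < 0` on `(r₀, R)`. -/
theorem stmt8 (N : ℕ) (hN : 3 ≤ N) (R r₀ Λ : ℝ) (hR : 0 < R) (hr₀ : 0 < r₀)
    (hr₀R : r₀ < R) (hΛ : Λ < 0) (f g : ℝ → ℝ)
    (hf : ContinuousOn f (Ioc 0 R)) (hg : ContinuousOn g (Ici 0))
    (hsign : ∀ s : ℝ, r₀ < s → s ^ (N - 1) * f s + Λ * s ^ (N - 3) < 0)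
    (z : ℝ → ℝ) (hz_reg : ContDiffOn ℝ 2 z (Icc 0 R))
    (hz_ode : ∀ r ∈ Ioo (0 : ℝ) R,
      -deriv (deriv z) r - (((N : ℝ) - 1) / r) * deriv z r - f r * z r = Λ * z r / r ^ 2)
    (hz0 : z 0 = 0) (hzR : z R = 0)
    (hz_nonneg : ∀ r ∈ Icc (0 : ℝ) R, 0 ≤ z r)
    (hz_le : ∀ r ∈ Icc (0 : ℝ) R, z r ≤ 1)
    (hzR' : deriv z R < 0) :
    ∀ r ∈ Ioo r₀ R, deriv z r < 0 := by
  have hopen : IsOpen (Ioo (0:ℝ) R) := isOpen_Ioo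
  have hz2 : ContDiffOn ℝ 2 z (Ioo 0 R) := hz_reg.mono Ioo_subset_Icc_self
  have hz1 : ContDiffOn ℝ 1 (deriv z) (Ioo 0 R) := by
    exact hz2.deriv_of_isOpen hopen (by norm_num)
  have hdz : ∀ x ∈ Ioo (0:ℝ) R, DifferentiableAt ℝ z x := fun x hx =>
    (hz2.differentiableOn (by norm_num)).differentiableAt (hopen.mem_nhds hx)
  have hddz : ∀ x ∈ Ioo (0:ℝ) R, DifferentiableAt ℝ (deriv z) x := fun x hx =>
    (hz1.differentiableOn (by norm_num)).differentiableAt (hopen.mem_nhds hx)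
  have hcontdz : ContinuousOn (deriv z) (Ioo 0 R) := hz1.continuousOn
  set w : ℝ → ℝ := fun x => x ^ (N-1) * deriv z x with hw_def
  -- derivative of w
  have hw : ∀ x ∈ Ioo (0:ℝ) R,
      HasDerivAt w (((N:ℝ)-1) * x ^ (N-2) * deriv z x + x ^ (N-1) * deriv (deriv z) x) x := by
    intro x hx
    have h1 : HasDerivAt (fun y : ℝ => y ^ (N-1)) (((N-1 : ℕ):ℝ) * x ^ (N-1-1)) x :=
      hasDerivAt_pow (N-1) x
    have h2 := (hddz x hx).hasDerivAt
    have := h1.mul h2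
    convert this using 1
    · rfl
    · rfl
    · rfl
    have e1 : ((N-1 : ℕ):ℝ) = (N:ℝ) - 1 := by
      have : (1:ℕ) ≤ N := by omega
      push_cast [Nat.cast_sub this]; ring
    have e2 : N - 1 - 1 = N - 2 := by omega
    rw [e1, e2]
  -- derivative of w via the ODE
  have hw' : ∀ x ∈ Ioo r₀ R,
      HasDerivAt w (-((x ^ (N-1) * f x + Λ * x ^ (N-3)) * z x)) x := by
    intro x hx
    have hx0R : x ∈ Ioo (0:ℝ) R := ⟨lt_trans hr₀ hx.1, hx.2⟩
    have hxpos : (0:ℝ) < x := hx0R.1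
    have hode := hz_ode x hx0R
    have hd2 : deriv (deriv z) x
        = -(((N:ℝ)-1)/x) * deriv z x - f x * z x - Λ * z x / x ^ 2 := by
      linarith [hode]
    have hkey : ((N:ℝ)-1) * x ^ (N-2) * deriv z x + x ^ (N-1) * deriv (deriv z) x
        = -((x ^ (N-1) * f x + Λ * x ^ (N-3)) * z x) := by
      rw [hd2]
      have e2 : x ^ (N-1) = x ^ (N-3) * x ^ 2 := by
        rw [← pow_add]; congr 1; omega
      have e3 : x ^ (N-2) = x ^ (N-3) * x := by
        rw [← pow_succ]; congr 1; omega
      rw [e2, e3]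
      field_simp
      ring
    exact hkey ▸ hw x hx0R
  have hsub : Ioo r₀ R ⊆ Ioo (0:ℝ) R := Ioo_subset_Ioo (le_of_lt hr₀) le_rfl
  -- w is monotone on (r₀, R)
  have hmono : MonotoneOn w (Ioo r₀ R) := by
    apply monotoneOn_of_deriv_nonneg (convex_Ioo r₀ R)
    · exact (continuousOn_id.pow (N-1)).mul (hcontdz.mono hsub)
    · intro x hx
      rw [interior_Ioo] at hx
      exact (hw' x hx).differentiableAt.differentiableWithinAt
    · intro x hx
      rw [interior_Ioo] at hx
      rw [(hw' x hx).deriv]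
      have hxpos : (0:ℝ) < x := lt_trans hr₀ hx.1
      have hzx : 0 ≤ z x := hz_nonneg x ⟨le_of_lt hxpos, le_of_lt hx.2⟩
      nlinarith [hsign x hx.1]
  intro r hr
  by_contra hcon
  push_neg at hcon
  have hrpos : (0:ℝ) < r := lt_trans hr₀ hr.1
  have hwr : 0 ≤ w r := mul_nonneg (pow_nonneg hrpos.le _) hcon
  -- deriv z is nonneg on (r, R)
  have hdznn : ∀ s ∈ Ioo r R, 0 ≤ deriv z s := by
    intro s hs
    have hs' : s ∈ Ioo r₀ R := ⟨lt_trans hr.1 hs.1, hs.2⟩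
    have hws : 0 ≤ w s := le_trans hwr (hmono hr hs' hs.1.le)
    have hspos : (0:ℝ) < s ^ (N-1) := pow_pos (lt_trans hrpos hs.1) _
    have hws' : 0 ≤ s ^ (N-1) * deriv z s := hws
    nlinarith [hws', hspos]
  -- z is monotone on [r, R]
  have hzm : MonotoneOn z (Icc r R) := by
    apply monotoneOn_of_deriv_nonneg (convex_Icc r R)
    · exact hz_reg.continuousOn.mono (Icc_subset_Icc hrpos.le le_rfl)
    · intro x hx
      rw [interior_Icc] at hx
      exact (hdz x ⟨lt_trans hrpos hx.1, hx.2⟩).differentiableWithinAt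
    · intro x hx
      rw [interior_Icc] at hx
      exact hdznn x hx
  -- z vanishes on [r, R]
  have hzero : ∀ s ∈ Icc r R, z s = 0 := by
    intro s hs
    have h1 : z s ≤ z R := by
      rw [← hzR] at *
      exact hzm hs (right_mem_Icc.mpr hr.2.le) hs.2
    have h2 : 0 ≤ z s := hz_nonneg s ⟨le_trans hrpos.le hs.1, hs.2⟩
    rw [hzR] at h1
    linarith
  -- hence deriv z R = 0, contradiction
  have hderR : deriv z R = 0 := by
    by_cases hdR : DifferentiableAt ℝ z R
    · have h1 : HasDerivWithinAt z (deriv z R) (Icc r R) R :=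
        hdR.hasDerivAt.hasDerivWithinAt
      have h2 : HasDerivWithinAt z 0 (Icc r R) R := by
        have hc : HasDerivWithinAt (fun _ : ℝ => (0:ℝ)) 0 (Icc r R) R :=
          (hasDerivWithinAt_const R (Icc r R) (0:ℝ))
        exact hc.congr (fun y hy => hzero y hy) hzR
      have hu : UniqueDiffWithinAt ℝ (Icc r R) R :=
        (uniqueDiffOn_Icc hr.2) R (right_mem_Icc.mpr hr.2.le)
      have e1 := h1.derivWithin hu
      have e2 := h2.derivWithin hu
      rw [← e1, e2]
    · exact deriv_zero_of_not_differentiableAt hdR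
  linarith
end
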